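/- Let δ ∈ (0,1) and let a, b, c, s be real numbers such that a ≥ δ, c ≥ δ s², and δ(t² + s²) ≤ a t² + 2 b t + c for all real t. Then a c − b² ≥ δ² s². -/
import Mathlib

/-- Key algebraic step in Lemma 3.1: if `a ≥ δ`, `c ≥ δ s²` and
`δ(t² + s²) ≤ a t² + 2 b t + c` for all `t`, then `a c − b² ≥ δ² s²`. -/
theorem symbol_lower_bound (δ a b c s : ℝ) (hδ : δ ∈ Set.Ioo (0 : ℝ) 1)
    (ha : δ ≤ a) (hc : δ * s ^ 2 ≤ c)
    (h : ∀ t : ℝ, δ * (t ^ 2 + s ^ 2) ≤ a * t ^ 2 + 2 * b * t + c) :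
    δ ^ 2 * s ^ 2 ≤ a * c - b ^ 2 := by
  obtain ⟨hδ0, hδ1⟩ := hδ
  have hq : ∀ t : ℝ, 0 ≤ (a - δ) * t ^ 2 + (2 * b) * t + (c - δ * s ^ 2) := by
    intro t; have := h t; nlinarith
  have hd : discrim (a - δ) (2 * b) (c - δ * s ^ 2) ≤ 0 := by
    apply discrim_le_zero
    intro t; have := hq t; nlinarith
  rw [discrim] at hd
  nlinarith [mul_le_mul_of_nonneg_left hc hδ0.le, mul_le_mul_of_nonneg_right ha (mul_nonneg hδ0.le (sq_nonneg s))]
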